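/- Let σ > 0 and let φ be a continuous probability density. Suppose there are α < β with β − α > 2π/σ such that φ(x) > 0 for all x ∈ (α, β). Then there exists G ∈ B¹_σ with G ≢ 0, ∫_ℝ G(x) dx = 0, and G(x) ≤ φ(x) for all x ∈ ℝ; consequently φ − G is a probability density whose characteristic function agrees with that of φ on {|t| > σ}. -/

import Mathlib

open MeasureTheory Real Set

/-- The characteristic function of a measure `μ` on `ℝ`: `f(t) = ∫ e^{-itx} dμ(x)`. -/
noncomputable def charFunOfMeasure (μ : Measure ℝ) (t : ℝ) : ℂ :=
  ∫ x : ℝ, Complex.exp (-(t * x) * Complex.I) ∂μ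

/-- The characteristic function of a density `φ`: `f(t) = ∫ e^{-itx} φ(x) dx`. -/
noncomputable def charFunOfDensity (φ : ℝ → ℝ) (t : ℝ) : ℂ :=
  ∫ x : ℝ, Complex.exp (-(t * x) * Complex.I) * (φ x : ℂ)

/-- `g` is the characteristic function of some probability measure on `ℝ`. -/
def IsCharFun (g : ℝ → ℂ) : Prop :=
  ∃ μ : Measure ℝ, IsProbabilityMeasure μ ∧ ∀ t, g t = charFunOfMeasure μ t

/-- `φ` is a probability density on `ℝ`. -/
def IsProbDensity (φ : ℝ → ℝ) : Prop :=
  Integrable φ ∧ (∀ᵐ x ∂(volume : Measure ℝ), 0 ≤ φ x) ∧ (∫ x, φ x) = 1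

/-- The essential support of a measurable function `φ : ℝ → ℝ`. -/
def essSupport (φ : ℝ → ℝ) : Set ℝ :=
  {x : ℝ | ∀ ε > 0, 0 < volume (Ioo (x - ε) (x + ε) ∩ {t : ℝ | 0 < |φ t|})}

/-- The Bernstein space `B¹_σ` of real-valued integrable functions whose Fourier
transform vanishes for `|t| > σ`, identified with their continuous representatives. -/
def MemB1 (σ : ℝ) (F : ℝ → ℝ) : Prop :=
  Continuous F ∧ Integrable F ∧
    ∀ t : ℝ, σ < |t| → (∫ x : ℝ, Complex.exp (-(t * x) * Complex.I) * (F x : ℂ)) = 0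

open scoped FourierTransform Convolution
open MeasureTheory Real Set Filter

namespace B1Aux

noncomputable def box (c w : ℝ) : ℝ → ℂ :=
  Set.indicator (Set.Icc (-w) w) (fun s => Complex.exp ((2 * π * c * s : ℝ) * Complex.I))

noncomputable def sincf (c w : ℝ) : ℝ → ℝ := fun x =>
  if x = c then 2 * w else Real.sin (2 * π * w * (x - c)) / (π * (x - c))

lemma box_integrable (c w : ℝ) : Integrable (box c w) := by
  rw [box, integrable_indicator_iff measurableSet_Icc]
  apply ContinuousOn.integrableOn_compact isCompact_Icc
  exact (Complex.continuous_exp.comp (by fun_prop)).continuousOn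

lemma fourier_box (c : ℝ) {w : ℝ} (hw : 0 < w) (x : ℝ) :
    𝓕 (box c w) x = ((sincf c w x : ℝ) : ℂ) := by
  rw [Real.fourier_real_eq_integral_exp_smul]
  simp_rw [smul_eq_mul]
  have hrw : (fun v : ℝ => Complex.exp ((-2 * π * v * x : ℝ) * Complex.I) * box c w v)
      = (Set.Icc (-w) w).indicator (fun v => Complex.exp ((-2 * π * v * x : ℝ) * Complex.I) *
          Complex.exp ((2 * π * c * v : ℝ) * Complex.I)) := by
    funext v
    rw [box]
    exact (Set.indicator_mul_right (Set.Icc (-w) w)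
      (fun v : ℝ => Complex.exp ((-2 * π * v * x : ℝ) * Complex.I))
      (fun s : ℝ => Complex.exp ((2 * π * c * s : ℝ) * Complex.I))).symm
  rw [hrw, integral_indicator measurableSet_Icc]
  have hcomb : ∀ v : ℝ, Complex.exp ((-2 * π * v * x : ℝ) * Complex.I) *
      Complex.exp ((2 * π * c * v : ℝ) * Complex.I)
      = Complex.exp ((((2 * π * (c - x) : ℝ)) * Complex.I) * (v : ℝ)) := by
    intro v
    rw [← Complex.exp_add]
    congr 1
    push_cast
    ring
  simp_rw [hcomb]
  rw [MeasureTheory.integral_Icc_eq_integral_Ioc,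
      ← intervalIntegral.integral_of_le (by linarith : -w ≤ w)]
  by_cases hx : x = c
  · subst hx
    simp only [sub_self, mul_zero, Complex.ofReal_zero, zero_mul, Complex.exp_zero]
    rw [intervalIntegral.integral_const]
    rw [sincf]
    simp
    ring
  · have hcx : c - x ≠ 0 := sub_ne_zero.2 (fun h => hx h.symm)
    have hk : ((2 * π * (c - x) : ℝ) : ℂ) * Complex.I ≠ 0 := by
      apply mul_ne_zero _ Complex.I_ne_zero
      rw [Complex.ofReal_ne_zero]
      exact mul_ne_zero (by positivity) hcx
    rw [integral_exp_mul_complex hk]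
    rw [sincf]
    simp only [hx, if_neg, ite_false]
    have hθ : ∀ s : ℝ, ((2 * π * (c - x) : ℝ) : ℂ) * Complex.I * (s : ℂ)
        = ((2 * π * (c - x) * s : ℝ) : ℂ) * Complex.I := by
      intro s; push_cast; ring
    rw [hθ w, hθ (-w)]
    rw [Complex.exp_mul_I, Complex.exp_mul_I]
    rw [← Complex.ofReal_cos, ← Complex.ofReal_sin, ← Complex.ofReal_cos, ← Complex.ofReal_sin]
    have e1 : (2 * π * (c - x) * -w : ℝ) = -(2 * π * (c - x) * w) := by ring
    rw [e1, Real.cos_neg, Real.sin_neg]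
    have e2 : Real.sin (2 * π * (c - x) * w) = -Real.sin (2 * π * w * (x - c)) := by
      rw [show (2 * π * (c - x) * w : ℝ) = -(2 * π * w * (x - c)) by ring, Real.sin_neg]
    rw [e2]
    have hπcxC : ((π * (x - c) : ℝ) : ℂ) ≠ 0 := by
      rw [Complex.ofReal_ne_zero]
      exact mul_ne_zero pi_ne_zero (sub_ne_zero.2 hx)
    rw [Complex.ofReal_div, div_eq_div_iff hk hπcxC]
    push_cast
    ring

lemma fourier_conv {f g : ℝ → ℂ} (hf : Integrable f) (hg : Integrable g) (x : ℝ) :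
    𝓕 (f ⋆[ContinuousLinearMap.mul ℂ ℂ, volume] g) x = 𝓕 f x * 𝓕 g x := by
  have h1 : Integrable (fun p : ℝ × ℝ => f p.2 * g (p.1 - p.2)) (volume.prod volume) := by
    have := hf.convolution_integrand (ContinuousLinearMap.mul ℂ ℂ) hg
    simpa using this
  have hkey : Integrable (fun p : ℝ × ℝ =>
      Complex.exp ((-2 * π * p.1 * x : ℝ) * Complex.I) * (f p.2 * g (p.1 - p.2)))
      (volume.prod volume) := by
    refine h1.bdd_mul (c := 1) ?_ ?_
    · apply Continuous.aestronglyMeasurable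
      exact Complex.continuous_exp.comp (by fun_prop)
    · filter_upwards with p
      rw [Complex.norm_exp]
      simp
  rw [Real.fourier_real_eq_integral_exp_smul]
  simp_rw [smul_eq_mul, convolution_def, ContinuousLinearMap.mul_apply']
  calc (∫ u : ℝ, Complex.exp ((-2 * π * u * x : ℝ) * Complex.I) * ∫ s : ℝ, f s * g (u - s))
      = ∫ u : ℝ, ∫ s : ℝ, Complex.exp ((-2 * π * u * x : ℝ) * Complex.I) * (f s * g (u - s)) := by
        congr 1; funext u; rw [MeasureTheory.integral_const_mul]
    _ = ∫ s : ℝ, ∫ u : ℝ, Complex.exp ((-2 * π * u * x : ℝ) * Complex.I) * (f s * g (u - s)) :=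
        MeasureTheory.integral_integral_swap hkey
    _ = ∫ s : ℝ, f s * (Complex.exp ((-2 * π * s * x : ℝ) * Complex.I) * 𝓕 g x) := by
        congr 1; funext s
        have hsub := MeasureTheory.integral_add_right_eq_self
          (μ := volume) (fun u : ℝ => Complex.exp ((-2 * π * u * x : ℝ) * Complex.I) *
            (f s * g (u - s))) s
        rw [← hsub]
        rw [Real.fourier_real_eq_integral_exp_smul]
        simp_rw [smul_eq_mul, ← MeasureTheory.integral_const_mul]
        congr 1; funext u
        have : ((-2 * π * (u + s) * x : ℝ) : ℂ) * Complex.I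
            = ((-2 * π * s * x : ℝ) : ℂ) * Complex.I + ((-2 * π * u * x : ℝ) : ℂ) * Complex.I := by
          push_cast; ring
        rw [add_sub_cancel_right, this, Complex.exp_add]
        ring
    _ = 𝓕 f x * 𝓕 g x := by
        rw [Real.fourier_real_eq_integral_exp_smul f x,
            Real.fourier_real_eq_integral_exp_smul g x]
        simp_rw [smul_eq_mul]
        rw [← MeasureTheory.integral_mul_const]
        congr 1; funext s; ring

noncomputable def conv2 (a b w : ℝ) : ℝ → ℂ :=
  (box a w) ⋆[ContinuousLinearMap.mul ℂ ℂ, volume] (box b w)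

lemma conv2_integrable (a b w : ℝ) : Integrable (conv2 a b w) :=
  (box_integrable a w).integrable_convolution _ (box_integrable b w)

lemma conv2_eq_zero {a b w : ℝ} {u : ℝ} (hu : 2 * w < |u|) : conv2 a b w u = 0 := by
  rw [conv2, convolution_def]
  rw [← MeasureTheory.integral_zero ℝ ℂ]
  congr 1
  funext s
  simp only [ContinuousLinearMap.mul_apply']
  rcases eq_or_ne (box a w s) 0 with h | h
  · rw [h, zero_mul]
  · rcases eq_or_ne (box b w (u - s)) 0 with h' | h'
    · rw [h', mul_zero]
    · exfalso
      have hs : s ∈ Set.Icc (-w) w := by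
        by_contra hc
        exact h (Set.indicator_of_notMem hc _)
      have hus : u - s ∈ Set.Icc (-w) w := by
        by_contra hc
        exact h' (Set.indicator_of_notMem hc _)
      rw [Set.mem_Icc] at hs hus
      have : |u| ≤ 2 * w := by
        rw [abs_le]
        constructor <;> linarith [hs.1, hs.2, hus.1, hus.2]
      linarith

lemma fourier_conv2 (a b w : ℝ) (x : ℝ) :
    𝓕 (conv2 a b w) x = 𝓕 (box a w) x * 𝓕 (box b w) x :=
  fourier_conv (box_integrable a w) (box_integrable b w) x


noncomputable def Efun (a b w : ℝ) : ℝ → ℂ := fun u =>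
  Complex.exp ((2 * π * b * u : ℝ) * Complex.I) *
    ((Complex.exp (((2 * π * (a - b) : ℝ) : ℂ) * Complex.I * ((min w (u + w) : ℝ) : ℂ)) -
      Complex.exp (((2 * π * (a - b) : ℝ) : ℂ) * Complex.I * ((max (-w) (u - w) : ℝ) : ℂ))) /
     (((2 * π * (a - b) : ℝ) : ℂ) * Complex.I))

lemma continuous_Efun (a b w : ℝ) : Continuous (Efun a b w) := by
  have hmin : Continuous fun u : ℝ => ((min w (u + w) : ℝ) : ℂ) :=
    Complex.continuous_ofReal.comp (continuous_const.min (continuous_id.add continuous_const))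
  have hmax : Continuous fun u : ℝ => ((max (-w) (u - w) : ℝ) : ℂ) :=
    Complex.continuous_ofReal.comp (continuous_const.max (continuous_id.sub continuous_const))
  apply Continuous.mul
  · exact Complex.continuous_exp.comp (by fun_prop)
  · apply Continuous.div_const
    exact (Complex.continuous_exp.comp (continuous_const.mul hmin)).sub
      (Complex.continuous_exp.comp (continuous_const.mul hmax))

lemma conv2_eq_Efun {a b w : ℝ} (hab : a ≠ b) {u : ℝ} (hu : |u| ≤ w) :
    conv2 a b w u = Efun a b w u := by
  have hw0 : 0 ≤ w := le_trans (abs_nonneg u) hu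
  rw [abs_le] at hu
  set lo := max (-w) (u - w) with hlo
  set hi := min w (u + w) with hhi
  have hlohi : lo ≤ hi := by
    rw [hlo, hhi]
    apply max_le <;> apply le_min <;> linarith
  have hk : ((2 * π * (a - b) : ℝ) : ℂ) * Complex.I ≠ 0 := by
    apply mul_ne_zero _ Complex.I_ne_zero
    rw [Complex.ofReal_ne_zero]
    exact mul_ne_zero (by positivity) (sub_ne_zero.2 hab)
  rw [conv2, convolution_def]
  simp only [ContinuousLinearMap.mul_apply']
  have hptw : ∀ s : ℝ, box a w s * box b w (u - s) =
      (Set.Icc lo hi).indicator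
        (fun s => Complex.exp ((2 * π * a * s : ℝ) * Complex.I) *
          Complex.exp ((2 * π * b * (u - s) : ℝ) * Complex.I)) s := by
    intro s
    rw [box, box]
    by_cases h1 : s ∈ Set.Icc (-w) w
    · by_cases h2 : u - s ∈ Set.Icc (-w) w
      · rw [Set.indicator_of_mem h1, Set.indicator_of_mem h2, Set.indicator_of_mem]
        rw [Set.mem_Icc] at h1 h2 ⊢
        constructor
        · exact max_le (by linarith [h1.1]) (by linarith [h2.2])
        · exact le_min (by linarith [h1.2]) (by linarith [h2.1])
      · rw [Set.indicator_of_notMem h2, mul_zero, Set.indicator_of_notMem]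
        intro hc
        apply h2
        rw [Set.mem_Icc] at hc ⊢
        rw [hlo, hhi] at hc
        constructor
        · linarith [hc.2, min_le_right w (u + w)]
        · linarith [hc.1, le_max_right (-w) (u - w)]
    · rw [Set.indicator_of_notMem h1, zero_mul, Set.indicator_of_notMem]
      intro hc
      apply h1
      rw [Set.mem_Icc] at hc ⊢
      rw [hlo, hhi] at hc
      constructor
      · linarith [hc.1, le_max_left (-w) (u - w)]
      · linarith [hc.2, min_le_left w (u + w)]
  simp_rw [hptw]
  rw [integral_indicator measurableSet_Icc, MeasureTheory.integral_Icc_eq_integral_Ioc,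
    ← intervalIntegral.integral_of_le hlohi]
  have hcomb : ∀ s : ℝ, Complex.exp ((2 * π * a * s : ℝ) * Complex.I) *
      Complex.exp ((2 * π * b * (u - s) : ℝ) * Complex.I)
      = Complex.exp ((2 * π * b * u : ℝ) * Complex.I) *
        Complex.exp ((((2 * π * (a - b) : ℝ) : ℂ) * Complex.I) * (s : ℂ)) := by
    intro s
    rw [← Complex.exp_add, ← Complex.exp_add]
    congr 1
    push_cast
    ring
  simp_rw [hcomb]
  rw [intervalIntegral.integral_const_mul, integral_exp_mul_complex hk]
  rw [Efun]

lemma conv2_zero_at_zero {a b w : ℝ} (hw : 0 < w) (hab : a ≠ b)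
    (h1 : 2 * (b - a) * w = 1) : conv2 a b w 0 = 0 := by
  rw [conv2_eq_Efun hab (by rw [abs_zero]; exact hw.le), Efun]
  have h2 : Complex.exp (((2 * π * (a - b) : ℝ) : ℂ) * Complex.I * ((min w (0 + w) : ℝ) : ℂ))
      = Complex.exp (((2 * π * (a - b) : ℝ) : ℂ) * Complex.I * ((max (-w) (0 - w) : ℝ) : ℂ)) := by
    rw [zero_add, min_self, zero_sub, max_self]
    rw [Complex.exp_eq_exp_iff_exists_int]
    refine ⟨-1, ?_⟩
    have h1' : ((2:ℂ) * (b - a) * w) = 1 := by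
      have := congrArg (fun r : ℝ => (r : ℂ)) h1
      push_cast at this
      exact this
    push_cast
    linear_combination (-2 * (π : ℂ) * Complex.I) * h1'
  rw [h2, sub_self, zero_div, mul_zero]

lemma conv2_continuousAt_zero {a b w : ℝ} (hw : 0 < w) (hab : a ≠ b) :
    ContinuousAt (conv2 a b w) 0 := by
  apply ContinuousAt.congr (continuous_Efun a b w).continuousAt
  filter_upwards [Metric.ball_mem_nhds (0:ℝ) hw] with u hu
  rw [Metric.mem_ball, Real.dist_eq, sub_zero] at hu
  exact (conv2_eq_Efun hab hu.le).symm

lemma sincf_bound {c w : ℝ} {x : ℝ} (hx : x ≠ c) : |sincf c w x| ≤ (π * |x - c|)⁻¹ := by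
  rw [sincf, if_neg hx, abs_div]
  rw [abs_mul, abs_of_pos pi_pos]
  have habs : (0:ℝ) < π * |x - c| := mul_pos pi_pos (abs_pos.2 (sub_ne_zero.2 hx))
  rw [div_le_iff₀ habs, inv_mul_cancel₀ habs.ne']
  exact Real.abs_sin_le_one _

lemma indicator_shift_right (r : ℝ) (g0 : ℝ → ℝ) :
    (fun x => Set.indicator (Set.Ioi (1:ℝ)) g0 (x - r))
      = Set.indicator (Set.Ioi (1 + r)) (fun x => g0 (x - r)) := by
  funext x
  simp only [Set.indicator_apply, Set.mem_Ioi, lt_sub_iff_add_lt]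

lemma indicator_shift_left (l : ℝ) (g0 : ℝ → ℝ) :
    (fun x => Set.indicator (Set.Ioi (1:ℝ)) g0 (l - x))
      = Set.indicator (Set.Iio (l - 1)) (fun x => g0 (l - x)) := by
  funext x
  simp only [Set.indicator_apply, Set.mem_Ioi, Set.mem_Iio, lt_sub_iff_add_lt]
  congr 1
  simp only [eq_iff_iff]
  constructor <;> intro h <;> linarith

lemma integrable_sincprod {a b w : ℝ}
    (hf : Continuous (fun x => sincf a w x * sincf b w x)) :
    Integrable (fun x => sincf a w x * sincf b w x) := by
  set P := fun x => sincf a w x * sincf b w x with hP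
  set l := min a b with hl
  set r := max a b with hr
  have hbase : IntegrableOn (fun t : ℝ => t ^ (-2:ℝ)) (Set.Ioi 1) :=
    integrableOn_Ioi_rpow_of_lt (by norm_num) one_pos
  have hind : Integrable (Set.indicator (Set.Ioi (1:ℝ)) (fun t => t ^ (-2:ℝ))) :=
    (integrable_indicator_iff measurableSet_Ioi).2 hbase
  -- pointwise bound on tails
  have key : ∀ x : ℝ, ∀ d : ℝ, 0 < d → (∀ c, c = a ∨ c = b → d ≤ |x - c|) → |P x| ≤ d ^ (-2:ℝ) := by
    intro x d hd hdist
    have hxa : x ≠ a := by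
      intro h; have := hdist a (Or.inl rfl); rw [h, sub_self, abs_zero] at this; linarith
    have hxb : x ≠ b := by
      intro h; have := hdist b (Or.inr rfl); rw [h, sub_self, abs_zero] at this; linarith
    have h1 : |sincf a w x| ≤ d⁻¹ := by
      refine (sincf_bound hxa).trans ?_
      apply inv_anti₀ hd
      calc d ≤ |x - a| := hdist a (Or.inl rfl)
        _ ≤ π * |x - a| := le_mul_of_one_le_left (abs_nonneg _) (by linarith [Real.pi_gt_three])
    have h2 : |sincf b w x| ≤ d⁻¹ := by
      refine (sincf_bound hxb).trans ?_
      apply inv_anti₀ hd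
      calc d ≤ |x - b| := hdist b (Or.inr rfl)
        _ ≤ π * |x - b| := le_mul_of_one_le_left (abs_nonneg _) (by linarith [Real.pi_gt_three])
    have : |P x| = |sincf a w x| * |sincf b w x| := abs_mul _ _
    rw [this]
    have hrw : d ^ (-2:ℝ) = d⁻¹ * d⁻¹ := by
      rw [show (-2:ℝ) = -(2:ℕ) by norm_num, Real.rpow_neg hd.le, Real.rpow_natCast]
      rw [pow_two, mul_inv]
    rw [hrw]
    exact mul_le_mul h1 h2 (abs_nonneg _) (by positivity)
  have hright : IntegrableOn P (Set.Ioi (r + 1)) := by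
    have h2 := hind.comp_sub_right r
    rw [indicator_shift_right] at h2
    have h3 : IntegrableOn (fun x : ℝ => (x - r) ^ (-2:ℝ)) (Set.Ioi (1 + r)) :=
      (integrable_indicator_iff measurableSet_Ioi).1 h2
    rw [show (1 + r : ℝ) = r + 1 by ring] at h3
    refine Integrable.mono' h3 hf.aestronglyMeasurable ?_
    rw [ae_restrict_iff' measurableSet_Ioi]
    filter_upwards with x hx
    rw [Set.mem_Ioi] at hx
    rw [Real.norm_eq_abs]
    have h4 : |P x| ≤ (x - r) ^ (-2:ℝ) := by
      apply key x (x - r) (by have := le_max_left a b; have := le_max_right a b; linarith)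
      intro c hc
      have hcr : c ≤ r := by rcases hc with h | h <;> rw [h] <;> [exact le_max_left a b; exact le_max_right a b]
      rw [abs_of_pos (by linarith : (0:ℝ) < x - c)]
      linarith
    exact h4
  have hleft : IntegrableOn P (Set.Iio (l - 1)) := by
    have h2 := hind.comp_sub_left l
    rw [indicator_shift_left] at h2
    have h3 : IntegrableOn (fun x : ℝ => (l - x) ^ (-2:ℝ)) (Set.Iio (l - 1)) :=
      (integrable_indicator_iff measurableSet_Iio).1 h2
    refine Integrable.mono' h3 hf.aestronglyMeasurable ?_
    rw [ae_restrict_iff' measurableSet_Iio]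
    filter_upwards with x hx
    rw [Set.mem_Iio] at hx
    rw [Real.norm_eq_abs]
    apply key x (l - x) (by have := min_le_left a b; have := min_le_right a b; linarith)
    intro c hc
    have hcl : l ≤ c := by rcases hc with h | h <;> rw [h] <;> [exact min_le_left a b; exact min_le_right a b]
    rw [abs_of_neg (by linarith : (x - c : ℝ) < 0)]
    linarith
  have hmid : IntegrableOn P (Set.Icc (l - 1) (r + 1)) := hf.integrableOn_Icc
  rw [← integrableOn_univ]
  have hun : IntegrableOn P (Set.Iio (l - 1) ∪ (Set.Icc (l - 1) (r + 1) ∪ Set.Ioi (r + 1))) :=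
    hleft.union (hmid.union hright)
  apply hun.mono_set
  intro x _
  by_cases h1 : x < l - 1
  · exact Or.inl h1
  · by_cases h2 : x ≤ r + 1
    · exact Or.inr (Or.inl ⟨by linarith, h2⟩)
    · exact Or.inr (Or.inr (by rw [Set.mem_Ioi]; linarith))

end B1Aux

open scoped FourierTransform

/-- construction step in Theorem 1.5. -/
theorem exists_memB1_perturbation_of_pos_on_long_interval
    (σ : ℝ) (hσ : 0 < σ) (φ : ℝ → ℝ) (hφ : IsProbDensity φ) (hcont : Continuous φ)
    (α β : ℝ) (hαβ : α < β) (hlen : 2 * π / σ < β - α)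
    (hpos : ∀ x ∈ Ioo α β, 0 < φ x) :
    ∃ G : ℝ → ℝ, MemB1 σ G ∧ (∃ x, G x ≠ 0) ∧ (∫ x, G x) = 0 ∧
      (∀ x : ℝ, G x ≤ φ x) ∧
      IsProbDensity (fun x => φ x - G x) ∧
      ∀ t : ℝ, σ < |t| →
        charFunOfDensity (fun x => φ x - G x) t = charFunOfDensity φ t := by
  classical
  obtain ⟨hφint, hφae, hφ1⟩ := hφ
  have hπ : (0:ℝ) < π := pi_pos
  set μmid : ℝ := (α + β) / 2 with hμmid
  set a : ℝ := μmid - π / σ with ha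
  set b : ℝ := μmid + π / σ with hb
  set w : ℝ := σ / (4 * π) with hwdef
  have hw : 0 < w := by rw [hwdef]; positivity
  have hπσ : 0 < π / σ := by positivity
  have hab : a < b := by rw [ha, hb]; linarith
  have hne : a ≠ b := ne_of_lt hab
  have hwab : 2 * (b - a) * w = 1 := by
    rw [ha, hb, hwdef]
    field_simp
    ring
  have hIcc : Icc a b ⊆ Ioo α β := by
    intro x hx
    rw [mem_Icc] at hx
    have h2 : π / σ < (β - α) / 2 := by
      have h3 : 2 * (π / σ) = 2 * π / σ := by ring
      linarith [hlen, h3]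
    have hxa := hx.1
    have hxb := hx.2
    rw [ha] at hxa
    rw [hb] at hxb
    rw [hμmid] at hxa hxb
    constructor <;> [linarith; linarith]
  -- the product of two sinc functions
  set P : ℝ → ℝ := fun x => B1Aux.sincf a w x * B1Aux.sincf b w x with hPdef
  have hFh : ∀ x : ℝ, 𝓕 (B1Aux.conv2 a b w) x = ((P x : ℝ) : ℂ) := by
    intro x
    rw [B1Aux.fourier_conv2, B1Aux.fourier_box a hw x, B1Aux.fourier_box b hw x]
    rw [← Complex.ofReal_mul]
  have hInt := B1Aux.conv2_integrable a b w
  have hcF : Continuous (𝓕 (B1Aux.conv2 a b w)) := by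
    apply VectorFourier.fourierIntegral_continuous Real.continuous_fourierChar
    · exact continuous_inner
    · exact hInt
  have hPcont : Continuous P := by
    have hP2 : P = fun x => (𝓕 (B1Aux.conv2 a b w) x).re := by
      funext x; rw [hFh x, Complex.ofReal_re]
    rw [hP2]
    exact Complex.continuous_re.comp hcF
  have hPint : Integrable P := B1Aux.integrable_sincprod hPcont
  have hPintC : Integrable (fun x => ((P x : ℝ) : ℂ)) := hPint.ofReal
  have hFhfun : 𝓕 (B1Aux.conv2 a b w) = fun x => ((P x : ℝ) : ℂ) := funext hFh
  have hFint : Integrable (𝓕 (B1Aux.conv2 a b w)) := by rw [hFhfun]; exact hPintC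
  have hinv : ∀ ξ : ℝ, ContinuousAt (B1Aux.conv2 a b w) (-ξ) →
      𝓕 (fun x => ((P x : ℝ) : ℂ)) ξ = B1Aux.conv2 a b w (-ξ) := by
    intro ξ hct
    rw [← hFhfun]
    have h1 := hInt.fourierInv_fourier_eq hFint hct
    rw [Real.fourierInv_eq_fourier_neg, neg_neg] at h1
    exact h1
  have hvanish : ∀ ξ : ℝ, 2 * w < |ξ| → 𝓕 (fun x => ((P x : ℝ) : ℂ)) ξ = 0 := by
    intro ξ hξ
    have hopen : ∀ᶠ u in nhds (-ξ), 2 * w < |u| := by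
      have hO : IsOpen {u : ℝ | 2 * w < |u|} := isOpen_lt continuous_const continuous_abs
      exact hO.eventually_mem (by simpa using hξ)
    have hct : ContinuousAt (B1Aux.conv2 a b w) (-ξ) := by
      apply ContinuousAt.congr (continuousAt_const (y := (0:ℂ)))
      filter_upwards [hopen] with u hu
      exact (B1Aux.conv2_eq_zero hu).symm
    rw [hinv ξ hct]
    exact B1Aux.conv2_eq_zero (by simpa using hξ)
  have hzero : 𝓕 (fun x => ((P x : ℝ) : ℂ)) 0 = 0 := by
    have hct : ContinuousAt (B1Aux.conv2 a b w) (-0) := by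
      rw [neg_zero]; exact B1Aux.conv2_continuousAt_zero hw hne
    rw [hinv 0 hct, neg_zero]
    exact B1Aux.conv2_zero_at_zero hw hne hwab
  -- bridge between the theorem's Fourier convention and mathlib's
  have hbridge : ∀ (f : ℝ → ℝ) (t : ℝ),
      (∫ x : ℝ, Complex.exp (-(t * x) * Complex.I) * ((f x : ℝ) : ℂ))
        = 𝓕 (fun x => ((f x : ℝ) : ℂ)) (t / (2 * π)) := by
    intro f t
    rw [Real.fourier_real_eq_integral_exp_smul]
    congr 1
    funext x
    rw [smul_eq_mul]
    have hreal : (-2 * π * x * (t / (2 * π)) : ℝ) = -(t * x) := by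
      field_simp
    rw [hreal]
    push_cast
    ring_nf
  have hPzero : (∫ x, P x) = 0 := by
    have h1 : 𝓕 (fun x => ((P x : ℝ) : ℂ)) 0 = ∫ x, ((P x : ℝ) : ℂ) := by
      rw [Real.fourier_real_eq]
      simp
    rw [hzero] at h1
    have h2 : (∫ x, ((P x : ℝ) : ℂ)) = ((∫ x, P x : ℝ) : ℂ) := integral_ofReal
    rw [h2] at h1
    exact_mod_cast h1.symm
  -- sign facts
  have hsinb : ∀ x : ℝ, Real.sin (2 * π * w * (x - b)) = - Real.sin (2 * π * w * (x - a)) := by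
    intro x
    have hθ : 2 * π * w * (x - b) = 2 * π * w * (x - a) - π := by
      have h4 : 2 * π * w * (b - a) = π := by linear_combination π * hwab
      linarith [h4]
    rw [hθ, Real.sin_sub_pi]
  have hP_nonpos : ∀ x : ℝ, x < a ∨ b < x → P x ≤ 0 := by
    intro x hx
    have hxa : x ≠ a := by
      rcases hx with h | h
      · exact ne_of_lt h
      · exact ne_of_gt (lt_trans hab h)
    have hxb : x ≠ b := by
      rcases hx with h | h
      · exact ne_of_lt (lt_trans h hab)
      · exact ne_of_gt h
    show B1Aux.sincf a w x * B1Aux.sincf b w x ≤ 0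
    rw [B1Aux.sincf, B1Aux.sincf]
    simp only [if_neg hxa, if_neg hxb]
    rw [hsinb x, div_mul_div_comm]
    rw [div_nonpos_iff]
    refine Or.inr ⟨?_, ?_⟩
    · have := mul_self_nonneg (Real.sin (2 * π * w * (x - a)))
      nlinarith
    · rcases hx with h | h
      · have h1 : π * (x - a) < 0 := mul_neg_of_pos_of_neg hπ (by linarith)
        have h2 : π * (x - b) < 0 := mul_neg_of_pos_of_neg hπ (by linarith)
        nlinarith
      · have h1 : 0 < π * (x - a) := mul_pos hπ (by linarith)
        have h2 : 0 < π * (x - b) := mul_pos hπ (by linarith)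
        nlinarith
  have hma : μmid - a = π / σ := by rw [ha]; ring
  have hmb : μmid - b = -(π / σ) := by rw [hb]; ring
  have hmnea : μmid ≠ a := by intro h; rw [← h] at hma; rw [sub_self] at hma; linarith
  have hmneb : μmid ≠ b := by intro h; rw [← h] at hmb; rw [sub_self] at hmb; linarith
  have hPm : 0 < P μmid := by
    show 0 < B1Aux.sincf a w μmid * B1Aux.sincf b w μmid
    rw [B1Aux.sincf, B1Aux.sincf]
    simp only [if_neg hmnea, if_neg hmneb]
    have harg1 : 2 * π * w * (μmid - a) = π / 2 := by
      rw [hma, hwdef]; field_simp; ring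
    have harg2 : 2 * π * w * (μmid - b) = -(π / 2) := by
      rw [hmb, hwdef]; field_simp; ring
    rw [harg1, harg2, Real.sin_pi_div_two, Real.sin_neg, Real.sin_pi_div_two]
    apply mul_pos
    · apply div_pos one_pos
      rw [hma]
      positivity
    · rw [div_pos_iff]
      refine Or.inr ⟨by norm_num, ?_⟩
      rw [hmb]
      nlinarith
  -- φ is nonnegative everywhere
  have hφ0 : ∀ x : ℝ, 0 ≤ φ x := by
    intro x
    by_contra hx
    push_neg at hx
    have hU : IsOpen (φ ⁻¹' (Iio 0)) := isOpen_Iio.preimage hcont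
    have hvol : volume (φ ⁻¹' (Iio 0)) = 0 := by
      rw [ae_iff] at hφae
      have hset : {y : ℝ | ¬ 0 ≤ φ y} = φ ⁻¹' (Iio 0) := by
        ext y; simp [not_le]
      rw [hset] at hφae
      exact hφae
    exact absurd hvol (hU.measure_pos volume ⟨x, hx⟩).ne'
  -- minimum of φ on [a,b]
  obtain ⟨x₀, hx₀mem, hx₀min⟩ :=
    isCompact_Icc.exists_isMinOn (nonempty_Icc.2 hab.le) hcont.continuousOn
  have hm₀ : 0 < φ x₀ := hpos x₀ (hIcc hx₀mem)
  set C := ∫ u, ‖B1Aux.conv2 a b w u‖ with hCdef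
  have hC0 : 0 ≤ C := integral_nonneg (fun u => norm_nonneg _)
  have hnormP : ∀ x : ℝ, |P x| ≤ C := by
    intro x
    have h1 : ‖𝓕 (B1Aux.conv2 a b w) x‖ ≤ C :=
      VectorFourier.norm_fourierIntegral_le_integral_norm _ _ _ _ _
    rw [hFh x, Complex.norm_real, Real.norm_eq_abs] at h1
    exact h1
  set ε := φ x₀ / (C + 1) with hεdef
  have hε : 0 < ε := div_pos hm₀ (by linarith)
  -- helper: integrability of modulated integrands
  have hexp1 : ∀ t x : ℝ, ‖Complex.exp (-(t * x) * Complex.I)‖ ≤ 1 := by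
    intro t x
    rw [Complex.norm_exp]
    simp [Complex.mul_re]
  have hmexp : ∀ t : ℝ, AEStronglyMeasurable
      (fun x : ℝ => Complex.exp (-((t:ℂ) * (x:ℂ)) * Complex.I)) volume := by
    intro t
    apply Continuous.aestronglyMeasurable
    exact Complex.continuous_exp.comp (by fun_prop)
  -- the perturbation G
  have hGint : Integrable (fun x => ε * P x) := hPint.const_mul ε
  have hGzero : (∫ x, ε * P x) = 0 := by
    rw [MeasureTheory.integral_const_mul, hPzero, mul_zero]
  have hGvanish : ∀ t : ℝ, σ < |t| →
      (∫ x : ℝ, Complex.exp (-(t * x) * Complex.I) * ((ε * P x : ℝ) : ℂ)) = 0 := by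
    intro t ht
    have h1 : ∀ x : ℝ, Complex.exp (-(t * x) * Complex.I) * ((ε * P x : ℝ) : ℂ)
        = (ε : ℂ) * (Complex.exp (-(t * x) * Complex.I) * ((P x : ℝ) : ℂ)) := by
      intro x; push_cast; ring
    simp_rw [h1]
    rw [MeasureTheory.integral_const_mul, hbridge P t, hvanish (t / (2 * π)) ?_, mul_zero]
    rw [abs_div, abs_of_pos (by positivity : (0:ℝ) < 2 * π), lt_div_iff₀ (by positivity)]
    have h2 : 2 * w * (2 * π) = σ := by rw [hwdef]; field_simp; ring
    rw [h2]
    exact ht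
  have hGle : ∀ x : ℝ, ε * P x ≤ φ x := by
    intro x
    by_cases hx : x ∈ Icc a b
    · have h1 : ε * P x ≤ ε * C :=
        mul_le_mul_of_nonneg_left (le_trans (le_abs_self _) (hnormP x)) hε.le
      have h2 : ε * C ≤ φ x₀ := by
        rw [hεdef, div_mul_eq_mul_div, div_le_iff₀ (by linarith : (0:ℝ) < C + 1)]
        nlinarith
      exact le_trans (le_trans h1 h2) (isMinOn_iff.1 hx₀min x hx)
    · have hx' : x < a ∨ b < x := by
        rw [mem_Icc] at hx
        push_neg at hx
        by_cases h : a ≤ x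
        · exact Or.inr (hx h)
        · exact Or.inl (lt_of_not_ge h)
      exact le_trans (mul_nonpos_iff.2 (Or.inl ⟨hε.le, hP_nonpos x hx'⟩)) (hφ0 x)
  refine ⟨fun x => ε * P x,
    ⟨continuous_const.mul hPcont, hGint, fun t ht => hGvanish t ht⟩,
    ⟨μmid, ne_of_gt (mul_pos hε hPm)⟩, hGzero, hGle, ?_, ?_⟩
  · refine ⟨hφint.sub hGint, ae_of_all _ (fun x => sub_nonneg.2 (hGle x)), ?_⟩
    rw [integral_sub hφint hGint, hGzero, sub_zero, hφ1]
  · intro t ht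
    have hIφ : Integrable (fun x : ℝ => Complex.exp (-(t * x) * Complex.I) * ((φ x : ℝ) : ℂ)) :=
      hφint.ofReal.bdd_mul (c := 1) (hmexp t) (ae_of_all _ (hexp1 t))
    have hIG : Integrable (fun x : ℝ =>
        Complex.exp (-(t * x) * Complex.I) * ((ε * P x : ℝ) : ℂ)) :=
      hGint.ofReal.bdd_mul (c := 1) (hmexp t) (ae_of_all _ (hexp1 t))
    rw [charFunOfDensity, charFunOfDensity]
    have hsplit : ∀ x : ℝ, Complex.exp (-(t * x) * Complex.I) * ((φ x - ε * P x : ℝ) : ℂ)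
        = Complex.exp (-(t * x) * Complex.I) * ((φ x : ℝ) : ℂ)
          - Complex.exp (-(t * x) * Complex.I) * ((ε * P x : ℝ) : ℂ) := by
      intro x; push_cast; ring
    simp_rw [hsplit]
    rw [integral_sub hIφ hIG, hGvanish t ht, sub_zero]
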